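/- Let x be a vector of n positive reals and E_k(x) = e_k(x)/C(n,k) the normalized elementary symmetric polynomials. Then for any integer l with 1 ≤ l ≤ n−2 and n ≥ 3: l·E_{l−1}(x)/E_l(x) − 2(l+1)·E_l(x)/E_{l+1}(x) + (l+2)·E_{l+1}(x)/E_{l+2}(x) ≥ 0. -/

import Mathlib

open BigOperators

/-- The elementary symmetric polynomial of degree `k` in the entries of `x`. -/
noncomputable def esym {n : ℕ} (k : ℕ) (x : Fin n → ℝ) : ℝ :=
  ∑ S ∈ Finset.univ.powersetCard k, ∏ i ∈ S, x i

/-- The normalized elementary symmetric polynomial `E_k(x) = e_k(x)/C(n,k)`. -/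
noncomputable def nesym {n : ℕ} (k : ℕ) (x : Fin n → ℝ) : ℝ :=
  esym k x / (n.choose k)


section Identities

set_option linter.unusedSectionVars false

variable {ι : Type*} [DecidableEq ι]

noncomputable def esum (x : ι → ℝ) (k : ℕ) (s : Finset ι) : ℝ :=
  ∑ T ∈ s.powersetCard k, ∏ i ∈ T, x i

lemma esum_zero (x : ι → ℝ) (s : Finset ι) : esum x 0 s = 1 := by
  simp [esum]

lemma esum_empty (x : ι → ℝ) (k : ℕ) : esum x (k + 1) ∅ = 0 := by
  rw [esum, Finset.powersetCard_eq_empty.2 (by simp)]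
  simp

lemma esum_insert (x : ι → ℝ) {a : ι} {s : Finset ι} (ha : a ∉ s) (k : ℕ) :
    esum x (k + 1) (insert a s) = esum x (k + 1) s + x a * esum x k s := by
  unfold esum
  rw [Finset.powersetCard_succ_insert ha, Finset.sum_union, Finset.sum_image, Finset.mul_sum]
  · congr 1
    refine Finset.sum_congr rfl fun T hT => ?_
    have haT : a ∉ T := fun h => ha ((Finset.mem_powersetCard.1 hT).1 h)
    rw [Finset.prod_insert haT]
  · intro T hT T' hT' h
    have haT : a ∉ T := fun h => ha ((Finset.mem_powersetCard.1 hT).1 h)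
    have haT' : a ∉ T' := fun h => ha ((Finset.mem_powersetCard.1 hT').1 h)
    rw [← Finset.erase_insert haT, ← Finset.erase_insert haT', h]
  · rw [Finset.disjoint_left]
    intro T hT hT'
    have haT : a ∉ T := fun h => ha ((Finset.mem_powersetCard.1 hT).1 h)
    obtain ⟨T', hT', rfl⟩ := Finset.mem_image.1 hT'
    exact haT (Finset.mem_insert_self _ _)

lemma esum_one (x : ι → ℝ) (s : Finset ι) : esum x 1 s = ∑ i ∈ s, x i := by
  induction s using Finset.induction_on with
  | empty => simp [esum_empty]
  | insert _ _ ha ih =>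
    have h := esum_insert x ha 0
    norm_num [esum_zero] at h
    rw [h, Finset.sum_insert ha, ih]; ring

lemma esum2_insert (x : ι → ℝ) {a : ι} {s : Finset ι} (ha : a ∉ s) :
    esum x 2 (insert a s) = esum x 2 s + x a * ∑ i ∈ s, x i := by
  have h := esum_insert x ha 1
  norm_num [esum_one] at h
  exact h

lemma esum3_insert (x : ι → ℝ) {a : ι} {s : Finset ι} (ha : a ∉ s) :
    esum x 3 (insert a s) = esum x 3 s + x a * esum x 2 s := by
  have h := esum_insert x ha 2
  norm_num at h
  exact h

lemma identity2 (x : ι → ℝ) (s : Finset ι) :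
    (∑ i ∈ s, x i) ^ 2 = (∑ i ∈ s, x i ^ 2) + 2 * esum x 2 s := by
  induction s using Finset.induction_on with
  | empty => simp [esum_empty]
  | insert _ _ ha ih =>
    rw [Finset.sum_insert ha, Finset.sum_insert ha, esum2_insert _ ha]
    linear_combination ih

lemma identity3 (x : ι → ℝ) (s : Finset ι) :
    ∑ i ∈ s, x i ^ 3 =
      (∑ i ∈ s, x i) ^ 3 - 3 * (∑ i ∈ s, x i) * esum x 2 s + 3 * esum x 3 s := by
  induction s using Finset.induction_on with
  | empty => simp [esum_empty]
  | insert _ _ ha ih =>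
    rw [Finset.sum_insert ha, Finset.sum_insert ha, esum2_insert _ ha, esum3_insert _ ha]
    linear_combination ih

lemma identity4 (x : ι → ℝ) (s : Finset ι) :
    (∑ i ∈ s, x i) ^ 2 * esum x 2 s + 3 * (∑ i ∈ s, x i) * esum x 3 s
        - 4 * esum x 2 s ^ 2 =
      (∑ i ∈ s, x i) * (∑ i ∈ s, x i ^ 3) - (∑ i ∈ s, x i ^ 2) ^ 2 := by
  induction s using Finset.induction_on with
  | empty => simp [esum_empty]
  | @insert a s ha ih =>
    have h2 := identity2 x s
    have h3 := identity3 x s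
    rw [Finset.sum_insert ha, Finset.sum_insert ha, Finset.sum_insert ha,
      esum2_insert _ ha, esum3_insert _ ha]
    linear_combination ih - x a * h3 - 2 * x a ^ 2 * h2

end Identities


lemma esym_eq_esum {n : ℕ} (k : ℕ) (x : Fin n → ℝ) : esym k x = esum x k Finset.univ := rfl

lemma esym_pos {n k : ℕ} (hk : k ≤ n) (x : Fin n → ℝ) (hx : ∀ i, 0 < x i) : 0 < esym k x := by
  unfold esym
  apply Finset.sum_pos
  · intro T _; exact Finset.prod_pos fun i _ => hx i
  · exact Finset.powersetCard_nonempty.2 (by simpa using hk)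

lemma nesym_pos {n k : ℕ} (hk : k ≤ n) (x : Fin n → ℝ) (hx : ∀ i, 0 < x i) : 0 < nesym k x := by
  apply div_pos (esym_pos hk x hx)
  exact_mod_cast Nat.choose_pos hk

lemma esym_top {n : ℕ} (x : Fin n → ℝ) : esym n x = ∏ i, x i := by
  unfold esym
  have h2 : Finset.univ.powersetCard n = ({Finset.univ} : Finset (Finset (Fin n))) := by
    simpa using Finset.powersetCard_self (Finset.univ : Finset (Fin n))
  rw [h2, Finset.sum_singleton]

lemma esym_inv {n k : ℕ} (hk : k ≤ n) (x : Fin n → ℝ) (hx : ∀ i, 0 < x i) :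
    esym k (fun i => (x i)⁻¹) * esym n x = esym (n - k) x := by
  rw [esym_top]
  unfold esym
  rw [Finset.sum_mul]
  refine Finset.sum_nbij' (i := fun S => Sᶜ) (j := fun S => Sᶜ) ?_ ?_ ?_ ?_ ?_
  · intro S hS
    rw [Finset.mem_powersetCard_univ] at hS ⊢
    rw [Finset.card_compl, hS, Fintype.card_fin]
  · intro S hS
    rw [Finset.mem_powersetCard_univ] at hS ⊢
    rw [Finset.card_compl, hS, Fintype.card_fin]
    omega
  · intro S _; exact compl_compl S
  · intro S _; exact compl_compl S
  · intro S _
    have hne : (∏ i ∈ S, x i) ≠ 0 := by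
      apply Finset.prod_ne_zero_iff.2
      intro i _; exact (hx i).ne'
    rw [← Finset.prod_mul_prod_compl S x, Finset.prod_inv_distrib, ← mul_assoc,
      inv_mul_cancel₀ hne, one_mul]

lemma crux {n : ℕ} (x : Fin n → ℝ) (hx : ∀ i, 0 < x i) :
    0 ≤ esym 1 x ^ 2 * esym 2 x + 3 * esym 1 x * esym 3 x - 4 * esym 2 x ^ 2 := by
  have h1 : esym 1 x = ∑ i, x i := by
    rw [esym_eq_esum, esum_one]
  rw [h1, esym_eq_esum 2, esym_eq_esum 3, identity4]
  have hcs := Finset.sum_mul_sq_le_sq_mul_sq Finset.univ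
    (fun i => Real.sqrt (x i)) (fun i => Real.sqrt (x i) * x i)
  have e1 : ∀ i : Fin n, Real.sqrt (x i) * (Real.sqrt (x i) * x i) = x i ^ 2 := by
    intro i
    rw [← mul_assoc, Real.mul_self_sqrt (hx i).le]; ring
  have e2 : ∀ i : Fin n, Real.sqrt (x i) ^ 2 = x i := fun i => Real.sq_sqrt (hx i).le
  have e3 : ∀ i : Fin n, (Real.sqrt (x i) * x i) ^ 2 = x i ^ 3 := by
    intro i
    rw [mul_pow, Real.sq_sqrt (hx i).le]; ring
  rw [Finset.sum_congr rfl fun i _ => e1 i, Finset.sum_congr rfl fun i _ => e2 i,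
    Finset.sum_congr rfl fun i _ => e3 i] at hcs
  linarith

open Polynomial in
lemma reduce (m : ℕ) (hm : 1 ≤ m) (x : Fin (m + 1) → ℝ) (hx : ∀ i, 0 < x i) :
    ∃ y : Fin m → ℝ, (∀ i, 0 < y i) ∧ ∀ k, k ≤ m → nesym k y = nesym k x := by
  classical
  set p : Polynomial ℝ := ∏ i, (X - C (x i)) with hp
  have hp2 : p = (Multiset.map (fun i => X - C (x i)) Finset.univ.val).prod :=
    Finset.prod_eq_multiset_prod _ _
  have hpm : p = ((Finset.univ.val.map x).map fun t => X - C t).prod := by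
    rw [hp2, Multiset.map_map]; rfl
  have hcards : Multiset.card (Finset.univ.val.map x) = m + 1 := by simp
  have hroots : p.roots = Finset.univ.val.map x := by
    rw [hpm, roots_multiset_prod_X_sub_C]
  have hmonic : p.Monic := monic_prod_of_monic _ _ fun i _ => monic_X_sub_C _
  have hdeg : p.natDegree = m + 1 := by
    rw [hp, natDegree_prod _ _ fun i _ => X_sub_C_ne_zero (x i)]
    simp
  have hcoefftop : (derivative p).coeff m = (m + 1 : ℝ) := by
    rw [coeff_derivative, show m + 1 = p.natDegree from hdeg.symm, hmonic.coeff_natDegree]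
    push_cast; ring
  have hqdeg : (derivative p).natDegree = m := by
    have h1 : (derivative p).natDegree < m + 1 := by
      have := natDegree_derivative_lt (p := p) (by rw [hdeg]; omega)
      omega
    have h2 : m ≤ (derivative p).natDegree := le_natDegree_of_ne_zero (by
      rw [hcoefftop]; positivity)
    omega
  have hcard1 : Multiset.card p.roots = m + 1 := by rw [hroots, hcards]
  have hcard2 : Multiset.card (derivative p).roots = m := by
    have h1 := Polynomial.card_roots_le_derivative p
    have h2 := Polynomial.card_roots' (derivative p)
    rw [hqdeg] at h2; rw [hcard1] at h1; omega
  -- roots of the derivative are positive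
  have hrpos : ∀ r ∈ (derivative p).roots, (0:ℝ) < r := by
    intro r hr
    have hre : (derivative p).eval r = 0 := isRoot_of_mem_roots hr
    by_contra hneg
    push_neg at hneg
    have hev : (derivative p).eval r = ∑ i, ∏ j ∈ Finset.univ.erase i, (r - x j) := by
      rw [hp2, derivative_prod, ← Finset.sum_eq_multiset_sum, eval_finset_sum]
      refine Finset.sum_congr rfl fun i _ => ?_
      rw [eval_mul, show derivative (X - C (x i)) = 1 by simp, eval_one, mul_one,
        ← Finset.erase_val, ← Finset.prod_eq_multiset_prod, eval_prod]
      refine Finset.prod_congr rfl fun j _ => ?_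
      simp
    have hpos : 0 < ∑ i, ((-1:ℝ))^m * ∏ j ∈ Finset.univ.erase i, (r - x j) := by
      apply Finset.sum_pos _ Finset.univ_nonempty
      intro i _
      have hcard : (Finset.univ.erase i).card = m := by
        rw [Finset.card_erase_of_mem (Finset.mem_univ i)]; simp
      have hsw : ∏ j ∈ Finset.univ.erase i, (r - x j)
          = (-1:ℝ)^(Finset.univ.erase i).card * ∏ j ∈ Finset.univ.erase i, (x j - r) := by
        rw [← Finset.prod_const (-1:ℝ), ← Finset.prod_mul_distrib]
        refine Finset.prod_congr rfl fun j _ => by ring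
      rw [hcard] at hsw
      rw [hsw, ← mul_assoc, ← pow_add, Even.neg_one_pow ⟨m, rfl⟩, one_mul]
      exact Finset.prod_pos fun j _ => by have := hx j; linarith
    rw [← Finset.mul_sum, ← hev, hre, mul_zero] at hpos
    exact lt_irrefl _ hpos
  -- Vieta relation
  have hvieta : ∀ j, j ≤ m → ((m:ℝ) + 1) * (derivative p).roots.esymm j
      = ((m + 1 - j : ℕ) : ℝ) * esym j x := by
    intro j hj
    have hk : m - j ≤ (derivative p).natDegree := by rw [hqdeg]; omega
    have h1 := Polynomial.coeff_eq_esymm_roots_of_card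
      (p := derivative p) (by rw [hcard2, hqdeg]) hk
    have hld : (derivative p).leadingCoeff = ((m:ℝ)+1) := by
      rw [leadingCoeff, hqdeg, hcoefftop]
    rw [hqdeg, hld, show m - (m - j) = j from by omega] at h1
    have h2 : (derivative p).coeff (m - j) = p.coeff (m - j + 1) * ((m - j + 1 : ℕ) : ℝ) := by
      rw [coeff_derivative]; push_cast; ring
    have h3 := Multiset.prod_X_sub_C_coeff (Finset.univ.val.map x) (k := m - j + 1)
      (by rw [hcards]; omega)
    rw [hcards, show m + 1 - (m - j + 1) = j from by omega, ← hpm] at h3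
    have hes : (Finset.univ.val.map x).esymm j = esym j x := Finset.esymm_map_val x Finset.univ j
    have key : ((-1:ℝ))^j * (((m:ℝ) + 1) * (derivative p).roots.esymm j)
        = (-1:ℝ)^j * (((m + 1 - j : ℕ) : ℝ) * esym j x) := by
      have hc : (derivative p).coeff (m - j)
          = ((-1:ℝ)^j * esym j x) * ((m - j + 1 : ℕ) : ℝ) := by
        rw [h2, h3, hes]
      rw [h1] at hc
      have hcast : ((m - j + 1 : ℕ) : ℝ) = ((m + 1 - j : ℕ) : ℝ) := by
        congr 1; omega
      rw [hcast] at hc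
      linear_combination hc
    exact mul_left_cancel₀ (pow_ne_zero j (by norm_num : (-1:ℝ) ≠ 0)) key
  -- build the tuple y
  obtain ⟨y, hmap⟩ : ∃ y : Fin m → ℝ, Finset.univ.val.map y = (derivative p).roots := by
    refine ⟨fun i => (derivative p).roots.toList.get
      (Fin.cast (by rw [Multiset.length_toList, hcard2]) i), ?_⟩
    rw [Fin.univ_val_map]
    conv_rhs => rw [← Multiset.coe_toList (derivative p).roots]
    congr 1
    apply List.ext_getElem
    · simp [Multiset.length_toList, hcard2]
    · intro i h1 h2
      simp [List.getElem_ofFn]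
  have hesymy : ∀ k, esym k y = (derivative p).roots.esymm k := by
    intro k
    rw [← hmap]
    exact (Finset.esymm_map_val y Finset.univ k).symm
  refine ⟨y, ?_, ?_⟩
  · intro i
    apply hrpos
    rw [← hmap]
    exact Multiset.mem_map_of_mem y (Finset.mem_univ i)
  · intro k hk
    have hv := hvieta k hk
    rw [← hesymy] at hv
    unfold nesym
    have hch := Nat.choose_mul_succ_eq m k
    have hchR : (m.choose k : ℝ) * ((m:ℝ) + 1) = ((m+1).choose k : ℝ) * ((m + 1 - k : ℕ) : ℝ) := by
      exact_mod_cast congrArg (Nat.cast (R := ℝ)) hch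
    have h1 : (0:ℝ) < m.choose k := by exact_mod_cast Nat.choose_pos hk
    have h2 : (0:ℝ) < (m+1).choose k := by exact_mod_cast Nat.choose_pos (by omega)
    rw [div_eq_div_iff h1.ne' h2.ne']
    apply mul_right_cancel₀ (show ((m:ℝ) + 1) ≠ 0 by positivity)
    calc esym k y * ((m+1).choose k : ℝ) * ((m:ℝ)+1)
        = (((m:ℝ)+1) * esym k y) * ((m+1).choose k : ℝ) := by ring
      _ = (((m + 1 - k : ℕ) : ℝ) * esym k x) * ((m+1).choose k : ℝ) := by rw [hv]
      _ = esym k x * (((m+1).choose k : ℝ) * ((m + 1 - k : ℕ) : ℝ)) := by ring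
      _ = esym k x * ((m.choose k : ℝ) * ((m:ℝ)+1)) := by rw [← hchR]
      _ = esym k x * (m.choose k : ℝ) * ((m:ℝ)+1) := by ring


lemma base_case (l : ℕ) (hl : 1 ≤ l) (x : Fin (l + 2) → ℝ) (hx : ∀ i, 0 < x i) :
    0 ≤ l * nesym (l - 1) x / nesym l x - 2 * ((l + 1) * nesym l x / nesym (l + 1) x)
      + (l + 2) * nesym (l + 1) x / nesym (l + 2) x := by
  set y : Fin (l + 2) → ℝ := fun i => (x i)⁻¹ with hy
  have hyp : ∀ i, 0 < y i := fun i => inv_pos.2 (hx i)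
  have h3 : esym 3 y * esym (l+2) x = esym (l - 1) x := by
    have h := esym_inv (n := l+2) (k := 3) (by omega) x hx
    rwa [show l + 2 - 3 = l - 1 from by omega] at h
  have h2 : esym 2 y * esym (l+2) x = esym l x := by
    have h := esym_inv (n := l+2) (k := 2) (by omega) x hx
    rwa [show l + 2 - 2 = l from by omega] at h
  have h1 : esym 1 y * esym (l+2) x = esym (l+1) x := by
    have h := esym_inv (n := l+2) (k := 1) (by omega) x hx
    rwa [show l + 2 - 1 = l + 1 from by omega] at h
  have hA : 0 < esym 1 y := esym_pos (by omega) y hyp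
  have hB : 0 < esym 2 y := esym_pos (by omega) y hyp
  have hC : 0 < esym 3 y := esym_pos (by omega) y hyp
  have hE : 0 < esym (l+2) x := esym_pos (by omega) x hx
  have hcrux := crux y hyp
  have c1 : (l+2).choose (l+1) = l + 2 := Nat.choose_succ_self_right (l+1)
  have c2 : 2 * (l+2).choose l = (l+2) * (l+1) := by
    have h := Nat.choose_succ_right_eq (l+2) l
    rw [c1, show l + 2 - l = 2 from by omega] at h
    omega
  have c3 : 6 * (l+2).choose (l-1) = l * ((l+1) * (l+2)) := by
    have h := Nat.choose_succ_right_eq (l+2) (l-1)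
    rw [show l - 1 + 1 = l from by omega, show l + 2 - (l-1) = 3 from by omega] at h
    calc 6 * (l+2).choose (l-1) = 2 * ((l+2).choose (l-1) * 3) := by ring
      _ = 2 * ((l+2).choose l * l) := by rw [h]
      _ = (2 * (l+2).choose l) * l := by ring
      _ = ((l+2)*(l+1)) * l := by rw [c2]
      _ = l * ((l+1)*(l+2)) := by ring
  have r1 : (((l+2).choose (l+1) : ℕ) : ℝ) = (l:ℝ) + 2 := by
    rw [c1]; push_cast; ring
  have r2 : (((l+2).choose l : ℕ) : ℝ) = ((l:ℝ)+2) * ((l:ℝ)+1) / 2 := by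
    rw [eq_div_iff (by norm_num : (2:ℝ) ≠ 0)]
    have := congrArg (Nat.cast (R := ℝ)) c2
    push_cast at this
    linarith
  have r3 : (((l+2).choose (l-1) : ℕ) : ℝ) = (l:ℝ) * ((l:ℝ)+1) * ((l:ℝ)+2) / 6 := by
    rw [eq_div_iff (by norm_num : (6:ℝ) ≠ 0)]
    have := congrArg (Nat.cast (R := ℝ)) c3
    push_cast at this
    linarith
  have hl0 : (l:ℝ) ≠ 0 := by
    have : (1:ℝ) ≤ (l:ℝ) := by exact_mod_cast hl
    linarith
  have key : (l:ℝ) * nesym (l - 1) x / nesym l x - 2 * (((l:ℝ) + 1) * nesym l x / nesym (l + 1) x)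
      + ((l:ℝ) + 2) * nesym (l + 1) x / nesym (l + 2) x
      = 3 * esym 3 y / esym 2 y - 4 * esym 2 y / esym 1 y + esym 1 y := by
    unfold nesym
    rw [← h3, ← h2, ← h1, r1, r2, r3, Nat.choose_self, Nat.cast_one]
    field_simp
    ring
  rw [key]
  have heq : 3 * esym 3 y / esym 2 y - 4 * esym 2 y / esym 1 y + esym 1 y
      = (esym 1 y ^ 2 * esym 2 y + 3 * esym 1 y * esym 3 y - 4 * esym 2 y ^ 2)
        / (esym 1 y * esym 2 y) := by
    field_simp
    ring
  rw [heq]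
  exact div_nonneg hcrux (by positivity)

theorem stmt_8 (n : ℕ) (hn : 3 ≤ n) (x : Fin n → ℝ) (hx : ∀ i, 0 < x i)
    (l : ℕ) (hl : 1 ≤ l) (hl2 : l ≤ n - 2) :
    0 ≤ l * nesym (l - 1) x / nesym l x
        - 2 * ((l + 1) * nesym l x / nesym (l + 1) x)
        + (l + 2) * nesym (l + 1) x / nesym (l + 2) x := by
  have key : ∀ m, l + 2 ≤ m → ∀ x : Fin m → ℝ, (∀ i, 0 < x i) →
      0 ≤ l * nesym (l - 1) x / nesym l x
        - 2 * ((l + 1) * nesym l x / nesym (l + 1) x)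
        + (l + 2) * nesym (l + 1) x / nesym (l + 2) x := by
    intro m hm
    induction m, hm using Nat.le_induction with
    | base => exact fun x hx => base_case l hl x hx
    | succ m hm IH =>
      intro x hx
      obtain ⟨y, hy1, hy2⟩ := reduce m (by omega) x hx
      rw [← hy2 (l-1) (by omega), ← hy2 l (by omega), ← hy2 (l+1) (by omega),
        ← hy2 (l+2) (by omega)]
      exact IH y hy1
  have hn2 : l + 2 ≤ n := by omega
  exact key n hn2 x hx
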